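/- Let d ∈ {1,2,3}. Suppose u : (1,∞) → ℝ is nonnegative, twice differentiable, satisfies the radial equation u''(r) + ((d−1)/r)·u'(r) = u(r)² for all r > 1, u(r) → ∞ as r decreases to 1, and u(r) → 0 as r → ∞. Then u(r) ≥ 2(4−d)/r² for all r > 1. -/

import Mathlib

open Real Filter

/-- Second derivative test: if `w' c = 0` and `w'' c > 0`, then `c` is not a local max. -/
lemma no_local_max_aux {w : ℝ → ℝ} {c : ℝ}
    (hw : ∀ᶠ x in nhds c, DifferentiableAt ℝ w x)
    (hg : DifferentiableAt ℝ (deriv w) c)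
    (h0 : deriv w c = 0) (h2 : 0 < deriv (deriv w) c) :
    ¬ IsLocalMax w c := by
  intro hmax
  have hslope : Tendsto (slope (deriv w) c) (nhdsWithin c {c}ᶜ)
      (nhds (deriv (deriv w) c)) :=
    hasDerivAt_iff_tendsto_slope.mp hg.hasDerivAt
  have hpos : ∀ᶠ x in nhdsWithin c {c}ᶜ, 0 < slope (deriv w) c x :=
    hslope.eventually (eventually_gt_nhds h2)
  rw [eventually_nhdsWithin_iff] at hpos
  obtain ⟨ε, hε, hball⟩ := Metric.eventually_nhds_iff.mp ((hw.and hpos).and hmax)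
  have hδ : 0 < ε / 2 := by positivity
  have hmono : StrictMonoOn w (Set.Icc c (c + ε / 2)) := by
    apply strictMonoOn_of_deriv_pos (convex_Icc _ _)
    · intro x hx
      rw [Set.mem_Icc] at hx
      have hdist : dist x c < ε := by
        rw [Real.dist_eq, abs_lt]; constructor <;> linarith
      exact ((hball hdist).1.1).continuousAt.continuousWithinAt
    · intro x hx
      rw [interior_Icc, Set.mem_Ioo] at hx
      have hdist : dist x c < ε := by
        rw [Real.dist_eq, abs_lt]; constructor <;> linarith
      have hxc : c < x := hx.1
      have hs := (hball hdist).1.2 (Set.mem_compl_singleton_iff.mpr hxc.ne')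
      rw [slope_def_field, h0, sub_zero] at hs
      rcases div_pos_iff.mp hs with ⟨h, _⟩ | ⟨_, h⟩
      · exact h
      · linarith [sub_pos.mpr hxc]
  have h1 : w c < w (c + ε / 2) :=
    hmono (Set.left_mem_Icc.mpr (by linarith)) (Set.right_mem_Icc.mpr (by linarith))
      (by linarith)
  have h2' : w (c + ε / 2) ≤ w c := by
    refine (hball ?_).2
    rw [Real.dist_eq, abs_lt]; constructor <;> linarith
  linarith

/-- Radial form of `V^∞ ≤ U^{∞,1}`: a nonnegative solution of the radial equation
blowing up at the unit sphere and vanishing at infinity dominates the very singular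
solution `2(4-d)/r²`. -/
theorem stmt6 (d : ℕ) (hd : d = 1 ∨ d = 2 ∨ d = 3)
    (u : ℝ → ℝ)
    (hnonneg : ∀ r > (1 : ℝ), 0 ≤ u r)
    (hdiff : ∀ r > (1 : ℝ), DifferentiableAt ℝ u r)
    (hdiff' : ∀ r > (1 : ℝ), DifferentiableAt ℝ (deriv u) r)
    (heq : ∀ r > (1 : ℝ), deriv (deriv u) r + ((d : ℝ) - 1) / r * deriv u r = (u r) ^ 2)
    (hblow : Tendsto u (nhdsWithin 1 (Set.Ioi 1)) atTop)
    (hlim : Tendsto u atTop (nhds 0)) :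
    ∀ r > (1 : ℝ), 2 * (4 - (d : ℝ)) / r ^ 2 ≤ u r := by
  by_contra hcon
  push_neg at hcon
  obtain ⟨r0, hr0, hur0⟩ := hcon
  have hd4 : (1 : ℝ) ≤ 4 - (d : ℝ) := by
    rcases hd with h | h | h <;> simp [h] <;> norm_num
  set k : ℝ := 2 * (4 - (d : ℝ)) with hk
  have hkpos : 0 < k := by rw [hk]; linarith
  set V : ℝ → ℝ := fun r => k / r ^ 2 with hV
  set w : ℝ → ℝ := fun r => V r - u r with hwdef
  have hwr0 : 0 < w r0 := by
    simp only [hwdef, hV]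
    have : u r0 < k / r0 ^ 2 := hur0
    linarith
  -- derivatives of V
  have hV' : ∀ r : ℝ, r ≠ 0 → HasDerivAt V (-2 * k / r ^ 3) r := by
    intro r hr
    have h := (hasDerivAt_const r k).div (hasDerivAt_pow 2 r) (pow_ne_zero 2 hr)
    convert h using 1
    rfl
    rfl
    rfl
    field_simp
    ring
  set Vd : ℝ → ℝ := fun r => -2 * k / r ^ 3 with hVd
  have hV'' : ∀ r : ℝ, r ≠ 0 → HasDerivAt Vd (6 * k / r ^ 4) r := by
    intro r hr
    have h := (hasDerivAt_const r (-2 * k)).div (hasDerivAt_pow 3 r) (pow_ne_zero 3 hr)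
    convert h using 1
    rfl
    rfl
    rfl
    field_simp
    ring
  -- facts about w on (1, ∞)
  have hwdiff : ∀ r > (1 : ℝ), DifferentiableAt ℝ w r := by
    intro r hr
    exact ((hV' r (by linarith)).differentiableAt).sub (hdiff r hr)
  have hwd : ∀ r > (1 : ℝ), deriv w r = Vd r - deriv u r := by
    intro r hr
    exact ((hV' r (by linarith)).sub (hdiff r hr).hasDerivAt).deriv
  have hEqnhds : ∀ r > (1 : ℝ), (deriv w) =ᶠ[nhds r] fun x => Vd x - deriv u x := by
    intro r hr
    filter_upwards [isOpen_Ioi.mem_nhds hr] with x hx using hwd x hx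
  have hwdd : ∀ r > (1 : ℝ), DifferentiableAt ℝ (deriv w) r := by
    intro r hr
    exact (((hV'' r (by linarith)).sub (hdiff' r hr).hasDerivAt).differentiableAt).congr_of_eventuallyEq
      (hEqnhds r hr)
  have hwd2 : ∀ r > (1 : ℝ), deriv (deriv w) r = 6 * k / r ^ 4 - deriv (deriv u) r := by
    intro r hr
    rw [(hEqnhds r hr).deriv_eq]
    exact ((hV'' r (by linarith)).sub (hdiff' r hr).hasDerivAt).deriv
  -- pick a point near 1 where w < 0
  have ha : ∃ a, 1 < a ∧ a < r0 ∧ w a < 0 := by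
    have h1 : ∀ᶠ x in nhdsWithin 1 (Set.Ioi 1), k + 1 ≤ u x :=
      hblow.eventually (eventually_ge_atTop (k + 1))
    have h2 : ∀ᶠ x in nhdsWithin 1 (Set.Ioi 1), x ∈ Set.Ioo (1 : ℝ) r0 :=
      Filter.eventually_mem_set.mpr (Ioo_mem_nhdsGT_of_mem ⟨le_refl 1, hr0⟩)
    obtain ⟨a, hau, hamem⟩ := (h1.and h2).exists
    obtain ⟨ha1, har0⟩ := hamem
    refine ⟨a, ha1, har0, ?_⟩
    have hVa : V a ≤ k := by
      simp only [hV]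
      have h1a : (1 : ℝ) ≤ a ^ 2 := by nlinarith
      rw [div_le_iff₀ (by nlinarith)]
      nlinarith [mul_le_mul_of_nonneg_left h1a hkpos.le]
    simp only [hwdef]
    linarith
  obtain ⟨a, ha1, har0, hwa⟩ := ha
  -- pick a point beyond r0 where w < w r0
  have hb : ∃ b, r0 < b ∧ w b < w r0 := by
    have hVtop : Tendsto V atTop (nhds 0) := by
      have hp : Tendsto (fun r : ℝ => r ^ 2) atTop atTop :=
        tendsto_pow_atTop two_ne_zero
      simpa using tendsto_const_nhds.div_atTop hp
    have hwtop : Tendsto w atTop (nhds 0) := by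
      simpa using hVtop.sub hlim
    have h1 : ∀ᶠ x in atTop, w x < w r0 := hwtop.eventually_lt_const hwr0
    have h2 : ∀ᶠ x in atTop, r0 < x := eventually_gt_atTop r0
    obtain ⟨b, hb1, hb2⟩ := (h1.and h2).exists
    exact ⟨b, hb2, hb1⟩
  obtain ⟨b, hr0b, hwb⟩ := hb
  have hab : a ≤ b := by linarith
  -- maximum of w on [a, b]
  have hcont : ContinuousOn w (Set.Icc a b) := fun x hx =>
    (hwdiff x (lt_of_lt_of_le ha1 hx.1)).continuousAt.continuousWithinAt
  obtain ⟨c, hcmem, hcmax⟩ :=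
    isCompact_Icc.exists_isMaxOn ⟨a, Set.left_mem_Icc.mpr hab⟩ hcont
  have hr0mem : r0 ∈ Set.Icc a b := ⟨le_of_lt har0, le_of_lt hr0b⟩
  have hwc : w r0 ≤ w c := hcmax hr0mem
  have hca : a < c := by
    rcases lt_or_eq_of_le hcmem.1 with h | h
    · exact h
    · exfalso; rw [h] at hwa; linarith
  have hcb : c < b := by
    rcases lt_or_eq_of_le hcmem.2 with h | h
    · exact h
    · exfalso; rw [h] at hwc; linarith
  have hc1 : 1 < c := lt_trans ha1 hca
  have hlocal : IsLocalMax w c := hcmax.isLocalMax (Icc_mem_nhds hca hcb)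
  have hderiv0 : deriv w c = 0 := hlocal.deriv_eq_zero
  -- compute deriv u c from deriv w c = 0
  have hu' : deriv u c = -2 * k / c ^ 3 := by
    have := hwd c hc1
    rw [hderiv0] at this
    simp only [hVd] at this
    linarith
  have hc0 : (0 : ℝ) < c := by linarith
  -- second derivative is positive at c
  have hsecond : 0 < deriv (deriv w) c := by
    have he := heq c hc1
    have hdd : deriv (deriv u) c = (u c) ^ 2 - ((d : ℝ) - 1) / c * deriv u c := by
      linarith
    have e2 : deriv (deriv w) c = (k / c ^ 2 + u c) * (k / c ^ 2 - u c) := by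
      rw [hwd2 c hc1, hdd, hu', hk]
      field_simp
      ring
    rw [e2]
    have hVc : 0 < k / c ^ 2 := by positivity
    have huc : 0 ≤ u c := hnonneg c hc1
    have hwcpos : 0 < w c := lt_of_lt_of_le hwr0 hwc
    have hwcpos' : 0 < k / c ^ 2 - u c := by
      simp only [hwdef, hV] at hwcpos; exact hwcpos
    exact mul_pos (by linarith) hwcpos'
  -- contradiction via second derivative test
  exact no_local_max_aux
    (by filter_upwards [isOpen_Ioi.mem_nhds hc1] with x hx using hwdiff x hx)
    (hwdd c hc1) hderiv0 hsecond hlocal
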